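/- Let ε > 0 and let X, Y be n-dimensional complex inner product spaces. Let f be a holomorphic map from {z ∈ X | ‖z‖ < ε} to {w ∈ Y | ‖w‖ < 1}. Then for all z ∈ X with ‖z‖ ≤ ε/4, one has ‖f(z) − (f(0) + (Df)₀(z))‖ ≤ (16n³/ε²)‖z‖². -/

import Mathlib

open Metric Set


/-- Quantitative second-order Taylor remainder bound for a holomorphic map between
`n`-dimensional complex inner product spaces mapping the ball of radius `ε` into the unit ball. -/
theorem stmt_3 {X Y : Type*} [NormedAddCommGroup X] [InnerProductSpace ℂ X]
    [NormedAddCommGroup Y] [InnerProductSpace ℂ Y]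
    [FiniteDimensional ℂ X] [FiniteDimensional ℂ Y] (n : ℕ)
    (hX : Module.finrank ℂ X = n) (hY : Module.finrank ℂ Y = n)
    (ε : ℝ) (hε : 0 < ε) (f : X → Y)
    (hf : ∀ z ∈ Metric.ball (0 : X) ε, DifferentiableAt ℂ f z)
    (hrange : ∀ z ∈ Metric.ball (0 : X) ε, f z ∈ Metric.ball (0 : Y) 1) :
    ∀ z : X, ‖z‖ ≤ ε / 4 →
      ‖f z - (f 0 + fderiv ℂ f 0 z)‖ ≤ 16 * (n : ℝ) ^ 3 / ε ^ 2 * ‖z‖ ^ 2 := by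
  intro z hz
  rcases eq_or_ne z 0 with rfl | hz0
  · simp only [map_zero, add_zero, sub_self, norm_zero, norm_zero]
    positivity
  -- nontrivial X, so n ≥ 1
  have hn : 1 ≤ n := by
    have : Nontrivial X := nontrivial_of_ne z 0 hz0
    have := Module.finrank_pos (R := ℂ) (M := X)
    omega
  have hzpos : 0 < ‖z‖ := norm_pos_iff.2 hz0
  obtain ⟨R, hRr⟩ : ∃ R : NNReal, (R : ℝ) = ε / (2 * ‖z‖) :=
    ⟨_, Real.coe_toNNReal _ (by positivity)⟩
  set r : ℝ := (R : ℝ) with hr_set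
  have hr_def : r = ε / (2 * ‖z‖) := hRr
  have hr2 : 2 ≤ r := by
    rw [hr_def, le_div_iff₀ (by positivity)]
    nlinarith
  have hr0 : 0 < r := lt_of_lt_of_le (by norm_num) hr2
  set g : ℂ → Y := fun w => f (w • z) with hg_def
  have hmap : ∀ w : ℂ, ‖w‖ ≤ r → w • z ∈ Metric.ball (0 : X) ε := by
    intro w hw
    rw [mem_ball_zero_iff, norm_smul]
    calc ‖w‖ * ‖z‖ ≤ r * ‖z‖ := by gcongr
    _ = ε / 2 := by field_simp [hr_def]; rw [hr_def]; field_simp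
    _ < ε := by linarith
  have hgd : DifferentiableOn ℂ g (closedBall (0:ℂ) r) := by
    intro w hw
    have h1 : DifferentiableAt ℂ f (w • z) :=
      hf _ (hmap w (by simpa [mem_closedBall, dist_zero_right] using hw))
    exact (h1.comp w ((differentiable_id.smul_const z) w)).differentiableWithinAt
  have hRpos : 0 < R := by
    rw [← NNReal.coe_lt_coe, NNReal.coe_zero, ← hr_set]; exact hr0
  have hps : HasFPowerSeriesOnBall g (cauchyPowerSeries g 0 r) 0 R :=
    hgd.hasFPowerSeriesOnBall hRpos
  set p : FormalMultilinearSeries ℂ ℂ Y := cauchyPowerSeries g 0 r with hp_def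
  -- coefficient bound
  have hcoef : ∀ k : ℕ, ‖p k‖ ≤ r⁻¹ ^ k := by
    intro k
    refine (norm_cauchyPowerSeries_le g 0 r k).trans ?_
    rw [abs_of_pos hr0]
    have hint : (∫ θ : ℝ in (0)..2 * Real.pi, ‖g (circleMap 0 r θ)‖) ≤ 2 * Real.pi := by
      have hle : ∀ θ ∈ uIcc (0:ℝ) (2 * Real.pi), ‖g (circleMap 0 r θ)‖ ≤ 1 := by
        intro θ _
        have : circleMap 0 r θ • z ∈ Metric.ball (0:X) ε :=
          hmap _ (by simp [norm_circleMap_zero, abs_of_pos hr0])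
        exact le_of_lt (by simpa [mem_ball_zero_iff] using hrange _ this)
      calc (∫ θ : ℝ in (0)..2 * Real.pi, ‖g (circleMap 0 r θ)‖)
          ≤ ∫ _ : ℝ in (0)..2 * Real.pi, (1:ℝ) := by
            apply intervalIntegral.integral_mono_on Real.two_pi_pos.le
            · apply Continuous.intervalIntegrable
              have hc : ContinuousOn g (closedBall (0:ℂ) r) :=
                hgd.continuousOn
              apply (hc.comp_continuous (continuous_circleMap 0 r) ?_).norm
              intro θ
              simp [mem_closedBall, dist_zero_right,
                norm_circleMap_zero, abs_of_pos hr0]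
            · exact intervalIntegrable_const
            · intro θ hθ; exact hle θ (by simpa [uIcc_of_le Real.two_pi_pos.le] using hθ)
          _ = 2 * Real.pi := by simp
    calc (2 * Real.pi)⁻¹ * (∫ θ : ℝ in (0)..2 * Real.pi, ‖g (circleMap 0 r θ)‖) * r⁻¹ ^ k
        ≤ (2 * Real.pi)⁻¹ * (2 * Real.pi) * r⁻¹ ^ k := by gcongr
      _ = r⁻¹ ^ k := by rw [inv_mul_cancel₀ Real.two_pi_pos.ne']; ring
  -- has sum at w = 1
  set a : ℕ → Y := fun k => p k fun _ => (1:ℂ) with ha_def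
  have hsum : HasSum a (g 1) := by
    have h1 : (1:ℂ) ∈ Metric.eball (0:ℂ) R := by
      rw [EMetric.mem_ball, edist_zero_right]
      have hlt : (1:NNReal) < R := by
        rw [← NNReal.coe_lt_coe, ← hr_set, NNReal.coe_one]; linarith
      simpa using ENNReal.coe_lt_coe.2 hlt
    exact (by simpa using hps.hasSum h1 : HasSum (fun n => p.coeff n) (g 1))
  have ha0 : a 0 = f 0 := by
    have := hps.coeff_zero (fun _ => (1:ℂ))
    simpa [ha_def, hg_def] using this
  have ha1 : a 1 = fderiv ℂ f 0 z := by
    have hd : HasDerivAt g (fderiv ℂ f 0 z) 0 := by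
      have h₁ : HasFDerivAt f (fderiv ℂ f 0) ((0:ℂ) • z) := by
        rw [zero_smul]; exact (hf 0 (by simp [hε])).hasFDerivAt
      have h₂ : HasDerivAt (fun w : ℂ => w • z) z 0 := by
        simpa using (hasDerivAt_id (0:ℂ)).smul_const z
      exact h₁.comp_hasDerivAt 0 h₂
    have hderiv : deriv g 0 = p.coeff 1 := hps.hasFPowerSeriesAt.deriv
    have h11 : a 1 = p.coeff 1 := rfl
    rw [h11, ← hderiv, hd.deriv]
  have hg1 : g 1 = f z := by rw [hg_def]; simp
  -- norm bound of each tail term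
  have hterm : ∀ k : ℕ, ‖a (k + 2)‖ ≤ r⁻¹ ^ 2 * (1/2 : ℝ) ^ k := by
    intro k
    have h1 : ‖a (k+2)‖ ≤ ‖p (k+2)‖ := by
      have := (p (k+2)).le_opNorm (fun _ => (1:ℂ))
      simpa [ha_def] using this
    refine h1.trans ((hcoef (k+2)).trans ?_)
    have hrinv : r⁻¹ ≤ 1/2 := by
      rw [one_div]
      exact inv_anti₀ (by norm_num) hr2
    calc r⁻¹ ^ (k+2) = r⁻¹ ^ 2 * r⁻¹ ^ k := by ring
      _ ≤ r⁻¹ ^ 2 * (1/2:ℝ) ^ k := by gcongr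
  have hbsum : Summable (fun k : ℕ => r⁻¹ ^ 2 * (1/2 : ℝ) ^ k) :=
    (summable_geometric_two).mul_left _
  have hasum : Summable (fun k : ℕ => ‖a (k + 2)‖) :=
    Summable.of_nonneg_of_le (fun k => norm_nonneg _) hterm hbsum
  have key : f z - (f 0 + fderiv ℂ f 0 z) = ∑' k, a (k + 2) := by
    have h2 := hsum.summable.sum_add_tsum_nat_add 2
    rw [hsum.tsum_eq, hg1] at h2
    rw [Finset.sum_range_succ, Finset.sum_range_one, ha0, ha1] at h2
    rw [← h2]; abel
  rw [key]
  calc ‖∑' k, a (k + 2)‖ ≤ ∑' k, ‖a (k + 2)‖ := norm_tsum_le_tsum_norm hasum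
    _ ≤ ∑' k : ℕ, r⁻¹ ^ 2 * (1/2 : ℝ) ^ k := Summable.tsum_le_tsum hterm hasum hbsum
    _ = r⁻¹ ^ 2 * 2 := by rw [tsum_mul_left, tsum_geometric_two]

    _ = 8 * ‖z‖ ^ 2 / ε ^ 2 := by
        rw [hr_def]; field_simp; ring
    _ ≤ 16 * (n : ℝ) ^ 3 / ε ^ 2 * ‖z‖ ^ 2 := by
        have hn1 : (1:ℝ) ≤ (n:ℝ) := by exact_mod_cast hn
        rw [div_mul_eq_mul_div]
        gcongr ?_ / _
        have hn3 : (1:ℝ) ≤ (n:ℝ) ^ 3 := one_le_pow₀ hn1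
        nlinarith [mul_nonneg (by linarith : (0:ℝ) ≤ (n:ℝ) ^ 3 - 1) (sq_nonneg ‖z‖)]
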